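/- Let a uniform-block matrix Υ have blocks Υ_{gg} = γ_{gg}(J_{L_g} - I_{L_g}) and Υ_{gg'} = γ_{gg'} J_{L_g×L_{g'}}. The eigenvalues of Υ are -γ_{gg} with multiplicity L_g - 1 for each g, plus the eigenvalues of the G×G matrix -A_Υ' + B_Υ L where A_Υ' = diag(γ_{11},...,γ_{GG}), B_Υ = (γ_{gg'}), L = diag(L_1,...,L_G). Consequently, Υ has all eigenvalues less than 1 in absolute value if |γ_{gg}| < 1 for all g and the spectral radius of the G×G matrix Δ_Υ = -A_Υ' + B_Υ L is less than 1. -/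

import Mathlib

open Matrix BigOperators Polynomial

/-- The uniform-block matrix `N(A, B, ℓ) = A ∘ I(ℓ) + B ∘ J(ℓ)`. -/
def UB (G : ℕ) (L : Fin G → ℕ) (a : Fin G → ℝ) (B : Matrix (Fin G) (Fin G) ℝ) :
    Matrix ((g : Fin G) × Fin (L g)) ((g : Fin G) × Fin (L g)) ℝ :=
  Matrix.of fun i j => (if i = j then a i.1 else 0) + B i.1 j.1

private lemma evalCharpoly {n : Type*} [DecidableEq n] [Fintype n] {R : Type*} [CommRing R]
    (M : Matrix n n R) (x : R) :
    M.charpoly.eval x = (Matrix.diagonal (fun _ => x) - M).det := by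
  rw [Matrix.charpoly, ← Polynomial.coe_evalRingHom, RingHom.map_det]
  congr 1
  ext i j
  by_cases h : i = j
  · subst h; simp [charmatrix_apply_eq]
  · simp [charmatrix_apply_ne _ _ _ h, Matrix.diagonal_apply_ne _ h, Matrix.one_apply_ne h]

private lemma PBP (G : ℕ) (L : Fin G → ℕ) (Bγ : Matrix (Fin G) (Fin G) ℝ)
    (P : Matrix ((g : Fin G) × Fin (L g)) (Fin G) ℝ)
    (hP : P = Matrix.of fun i g => if i.1 = g then 1 else 0) :
    P * Bγ * Pᵀ = Matrix.of fun i j => Bγ i.1 j.1 := by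
  subst hP; ext i j
  simp [Matrix.mul_apply, Finset.sum_ite_eq, ite_mul, mul_ite]

private lemma PDP (G : ℕ) (L : Fin G → ℕ) (d : Fin G → ℝ)
    (P : Matrix ((g : Fin G) × Fin (L g)) (Fin G) ℝ)
    (hP : P = Matrix.of fun i g => if i.1 = g then 1 else 0) :
    Pᵀ * Matrix.diagonal (fun i : (g : Fin G) × Fin (L g) => d i.1) * P
      = Matrix.diagonal (fun g => (L g : ℝ) * d g) := by
  subst hP; ext g g'
  rw [Matrix.mul_apply]
  simp only [Matrix.mul_diagonal, transpose_apply, of_apply]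
  rw [← Finset.univ_sigma_univ, Finset.sum_sigma]
  by_cases h : g = g'
  · subst h
    simp [Finset.sum_ite_eq, mul_comm]
  · simp only [Matrix.diagonal_apply_ne _ h]
    apply Finset.sum_eq_zero
    intro a _
    by_cases ha : a = g <;> by_cases ha' : a = g' <;> simp_all

private lemma detEq (G : ℕ) (L : Fin G → ℕ) (hL : ∀ g, 0 < L g)
    (γd : Fin G → ℝ) (Bγ : Matrix (Fin G) (Fin G) ℝ) (x : ℝ)
    (hx : ∀ g, x + γd g ≠ 0) :
    (Matrix.diagonal (fun _ : (g : Fin G) × Fin (L g) => x) -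
        (Matrix.of fun i j : (g : Fin G) × Fin (L g) =>
          (if i = j then -(γd i.1) else 0) + Bγ i.1 j.1)).det =
      (∏ g, (x + γd g) ^ (L g - 1)) *
        (Matrix.diagonal (fun _ : Fin G => x) -
          (-Matrix.diagonal γd + Bγ * Matrix.diagonal (fun g => (L g : ℝ)))).det := by
  set P : Matrix ((g : Fin G) × Fin (L g)) (Fin G) ℝ :=
    Matrix.of fun i g => if i.1 = g then 1 else 0 with hP
  set d : ((g : Fin G) × Fin (L g)) → ℝ := fun i => x + γd i.1 with hd
  set dinv : ((g : Fin G) × Fin (L g)) → ℝ := fun i => (x + γd i.1)⁻¹ with hdinv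
  set diagL : Matrix (Fin G) (Fin G) ℝ := Matrix.diagonal (fun g => (L g : ℝ)) with hdiagL
  set diagM : Matrix (Fin G) (Fin G) ℝ :=
    Matrix.diagonal (fun g => (L g : ℝ) * (x + γd g)⁻¹) with hdiagM
  -- LHS
  have h1 : (Matrix.diagonal (fun _ : (g : Fin G) × Fin (L g) => x) -
      (Matrix.of fun i j : (g : Fin G) × Fin (L g) =>
        (if i = j then -(γd i.1) else 0) + Bγ i.1 j.1))
      = Matrix.diagonal d - P * Bγ * Pᵀ := by
    rw [PBP G L Bγ P hP]
    ext i j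
    by_cases h : i = j
    · subst h; simp [hd]; ring
    · simp [Matrix.diagonal_apply_ne _ h, h]
  have hone : Matrix.diagonal (fun i => d i * dinv i)
      = (1 : Matrix ((g : Fin G) × Fin (L g)) ((g : Fin G) × Fin (L g)) ℝ) := by
    have : (fun i : (g : Fin G) × Fin (L g) => d i * dinv i) = fun _ => (1:ℝ) := by
      funext i; exact mul_inv_cancel₀ (hx i.1)
    rw [this, Matrix.diagonal_one]
  have h2 : Matrix.diagonal d - P * Bγ * Pᵀ
      = Matrix.diagonal d * (1 - Matrix.diagonal dinv * (P * Bγ * Pᵀ)) := by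
    rw [Matrix.mul_sub, Matrix.mul_one, ← Matrix.mul_assoc, Matrix.diagonal_mul_diagonal,
      hone, Matrix.one_mul]
  have hPDP : Pᵀ * Matrix.diagonal dinv * P = diagM := by
    rw [hdinv, hdiagM]
    exact PDP G L (fun g => (x + γd g)⁻¹) P hP
  have h4 : (1 - Matrix.diagonal dinv * (P * Bγ * Pᵀ)).det
      = (1 - Bγ * diagM).det := by
    have e1 : Matrix.diagonal dinv * (P * Bγ * Pᵀ)
        = (Matrix.diagonal dinv * P * Bγ) * Pᵀ := by
      rw [Matrix.mul_assoc, Matrix.mul_assoc, Matrix.mul_assoc]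
    rw [e1, Matrix.det_one_sub_mul_comm]
    have e2 : Pᵀ * (Matrix.diagonal dinv * P * Bγ)
        = diagM * Bγ := by
      rw [← Matrix.mul_assoc, ← Matrix.mul_assoc, hPDP]
    rw [e2, Matrix.det_one_sub_mul_comm]
  -- RHS
  have h5a : (Matrix.diagonal (fun _ : Fin G => x) -
      (-Matrix.diagonal γd + Bγ * diagL))
      = Matrix.diagonal (fun g => x + γd g) - Bγ * diagL := by
    ext i j
    by_cases h : i = j
    · subst h; simp [Matrix.diagonal_apply_eq]; ring
    · simp [Matrix.diagonal_apply_ne _ h]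
  have honeG : Matrix.diagonal (fun g => (x + γd g) * (x + γd g)⁻¹)
      = (1 : Matrix (Fin G) (Fin G) ℝ) := by
    have : (fun g => (x + γd g) * (x + γd g)⁻¹) = fun _ : Fin G => (1:ℝ) := by
      funext g; exact mul_inv_cancel₀ (hx g)
    rw [this, Matrix.diagonal_one]
  have h5b : Matrix.diagonal (fun g => x + γd g) - Bγ * diagL
      = Matrix.diagonal (fun g => x + γd g) *
        (1 - Matrix.diagonal (fun g => (x + γd g)⁻¹) * (Bγ * diagL)) := by
    rw [Matrix.mul_sub, Matrix.mul_one, ← Matrix.mul_assoc, Matrix.diagonal_mul_diagonal,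
      honeG, Matrix.one_mul]
  have h6 : (1 - Matrix.diagonal (fun g => (x + γd g)⁻¹) * (Bγ * diagL)).det
      = (1 - Bγ * diagM).det := by
    rw [Matrix.det_one_sub_mul_comm, Matrix.mul_assoc, hdiagL, Matrix.diagonal_mul_diagonal,
      hdiagM]
  rw [h1, h2, Matrix.det_mul, Matrix.det_diagonal, h4, h5a, h5b, Matrix.det_mul,
    Matrix.det_diagonal, h6]
  have hprod : (∏ i : (g : Fin G) × Fin (L g), d i) = ∏ g, (x + γd g) ^ (L g) := by
    rw [← Finset.univ_sigma_univ, Finset.prod_sigma]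
    simp [hd]
  have hsplit : (∏ g, (x + γd g) ^ (L g))
      = (∏ g, (x + γd g) ^ (L g - 1)) * ∏ g, (x + γd g) := by
    rw [← Finset.prod_mul_distrib]
    apply Finset.prod_congr rfl
    intro g _
    rw [← pow_succ]
    congr 1
    have := hL g
    omega
  rw [hprod, hsplit, mul_assoc]

/-- For the uniform-block matrix `Υ` with blocks `Υ_{gg} = γ_{gg}(J_{L_g} - I_{L_g})`
and `Υ_{gg'} = γ_{gg'} J`, the eigenvalues of `Υ` are `-γ_{gg}` with multiplicity
`L_g - 1`, together with the eigenvalues of `Δ_Υ = -A'_Υ + B_Υ L` where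
`A'_Υ = diag(γ_{11}, …, γ_{GG})`, `B_Υ = (γ_{gg'})`, `L = diag(L_1, …, L_G)`
(expressed via characteristic polynomials). Consequently, `Υ` has all eigenvalues of
absolute value less than `1` if `|γ_{gg}| < 1` for all `g` and the spectral radius of
`Δ_Υ` is less than `1`. -/
theorem UB_Upsilon_eigen (G : ℕ) (L : Fin G → ℕ) (hL : ∀ g, 0 < L g)
    (γd : Fin G → ℝ) (Bγ : Matrix (Fin G) (Fin G) ℝ) (hBγ : Bγ.IsSymm)
    (hdiag : ∀ g, Bγ g g = γd g) :
    ((UB G L (fun g => -(γd g)) Bγ).charpoly =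
      (∏ g, (Polynomial.X + Polynomial.C (γd g)) ^ (L g - 1)) *
        (-Matrix.diagonal γd + Bγ * Matrix.diagonal (fun g => (L g : ℝ))).charpoly) ∧
    ((∀ g, |γd g| < 1) →
      (∀ μ : ℂ, (((-Matrix.diagonal γd + Bγ * Matrix.diagonal (fun g => (L g : ℝ))).map
          (algebraMap ℝ ℂ)).charpoly.IsRoot μ) → ‖μ‖ < 1) →
      ∀ μ : ℂ, (((UB G L (fun g => -(γd g)) Bγ).map
          (algebraMap ℝ ℂ)).charpoly.IsRoot μ) → ‖μ‖ < 1) := by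
  have hUB : UB G L (fun g => -(γd g)) Bγ
      = Matrix.of fun i j : (g : Fin G) × Fin (L g) =>
          (if i = j then -(γd i.1) else 0) + Bγ i.1 j.1 := rfl
  have key : (UB G L (fun g => -(γd g)) Bγ).charpoly =
      (∏ g, (Polynomial.X + Polynomial.C (γd g)) ^ (L g - 1)) *
        (-Matrix.diagonal γd + Bγ * Matrix.diagonal (fun g => (L g : ℝ))).charpoly := by
    apply Polynomial.eq_of_infinite_eval_eq
    apply Set.Infinite.mono (s := (Set.range fun g => -γd g)ᶜ)
    · intro x hx
      have hx' : ∀ g, x + γd g ≠ 0 := by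
        intro g h
        exact hx ⟨g, by simp; linarith⟩
      show _ = _
      rw [evalCharpoly, Polynomial.eval_mul, evalCharpoly, hUB,
        detEq G L hL γd Bγ x hx']
      congr 1
      rw [Polynomial.eval_prod]
      apply Finset.prod_congr rfl
      intro g _
      simp
    · exact (Set.finite_range fun g => -γd g).infinite_compl
  refine ⟨key, ?_⟩
  intro h1 h2 μ hroot
  rw [Matrix.charpoly_map, key, Polynomial.map_mul] at hroot
  have h0 : Polynomial.eval μ (Polynomial.map (algebraMap ℝ ℂ)
        (∏ g, (Polynomial.X + Polynomial.C (γd g)) ^ (L g - 1))) *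
      Polynomial.eval μ (Polynomial.map (algebraMap ℝ ℂ)
        (-Matrix.diagonal γd + Bγ * Matrix.diagonal (fun g => (L g : ℝ))).charpoly) = 0 := by
    have := hroot
    rwa [Polynomial.IsRoot.def, Polynomial.eval_mul] at this
  rcases mul_eq_zero.mp h0 with h | h
  · rw [Polynomial.eval_map, Polynomial.eval₂_finset_prod] at h
    obtain ⟨g, -, hg⟩ := Finset.prod_eq_zero_iff.mp h
    simp only [Polynomial.eval₂_pow, Polynomial.eval₂_add, Polynomial.eval₂_X,
      Polynomial.eval₂_C] at hg
    have hμ : μ + algebraMap ℝ ℂ (γd g) = 0 := (pow_eq_zero_iff'.mp hg).1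
    have : μ = -((γd g : ℝ) : ℂ) := by
      rw [eq_neg_of_add_eq_zero_left hμ]; rfl
    rw [this]
    simpa [Complex.norm_real] using h1 g
  · apply h2 μ
    rw [Matrix.charpoly_map]
    exact h
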